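/- Let n > 2 and let K_12 = (S_n ∪ {g_1}, S_n ∪ {m_1,m_2}, I) be the formal context in which (g,m) ∈ I iff g,m ∈ S_n and g ≠ m, or g = g_1 and m ∈ S_n, or g ∈ m_1' and m = m_1, or g ∈ m_2' and m = m_2, where m_1', m_2' ⊆ S_n satisfy m_1' ∪ m_2' = S_n, ∅ ⊊ m_1', m_2' ⊊ S_n, and m_1', m_2' are incomparable. Let K_s be the ∃-generalized context obtained from K_12 by replacing m_1, m_2 with a single attribute s whose extension is m_1' ∪ m_2'. Then |𝔅(K_s)| − |𝔅(K_12)| = 2^n − 2^{|m_1'|} − 2^{|m_2'|} + 2^{|m_1' ∩ m_2'|}. -/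
import Mathlib


/-- The intent (attribute derivation) of a set of objects. -/
def intentOf {G M : Type*} (I : G → M → Prop) (A : Set G) : Set M :=
  {m | ∀ g ∈ A, I g m}

/-- The extent (object derivation) of a set of attributes. -/
def extentOf {G M : Type*} (I : G → M → Prop) (B : Set M) : Set G :=
  {g | ∀ m ∈ B, I g m}

/-- The formal concepts of a context: pairs `(A, B)` with `A' = B` and `B' = A`. -/
def Concepts {G M : Type*} (I : G → M → Prop) : Set (Set G × Set M) :=
  {p | intentOf I p.1 = p.2 ∧ extentOf I p.2 = p.1}

/-- The context `K_12 = (S_n ∪ {g_1}, S_n ∪ {m_1, m_2}, I)` with prescribed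
extensions `m1, m2 ⊆ S_n` of the two extra attributes: objects are
`Fin n ⊕ Unit` (with `Sum.inr () = g_1`), attributes are `Fin n ⊕ Bool`
(with `Sum.inr false = m_1` and `Sum.inr true = m_2`). -/
def K12 (n : ℕ) (m1 m2 : Set (Fin n)) :
    (Fin n ⊕ Unit) → (Fin n ⊕ Bool) → Prop
  | Sum.inl g, Sum.inl m => g ≠ m
  | Sum.inr _, Sum.inl _ => True
  | Sum.inl g, Sum.inr false => g ∈ m1
  | Sum.inl g, Sum.inr true => g ∈ m2
  | Sum.inr _, Sum.inr _ => False

/-- The ∃-generalized context `K_s`: the attributes `m_1, m_2` of `K_12` are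
replaced by a single attribute `s = Sum.inr ()` with extension
`s' = m_1' ∪ m_2'`, leaving the remaining attributes and incidences
unchanged. -/
def Ks (n : ℕ) (m1 m2 : Set (Fin n)) :
    (Fin n ⊕ Unit) → (Fin n ⊕ Unit) → Prop
  | Sum.inl g, Sum.inl m => g ≠ m
  | Sum.inr _, Sum.inl _ => True
  | Sum.inl g, Sum.inr _ => g ∈ m1 ∪ m2
  | Sum.inr _, Sum.inr _ => False

section Aux
variable {n : ℕ} {m1 m2 : Set (Fin n)}

@[simp] lemma Ks_ll {g m : Fin n} : Ks n m1 m2 (Sum.inl g) (Sum.inl m) ↔ g ≠ m := Iff.rfl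
@[simp] lemma Ks_rl {u : Unit} {m : Fin n} : Ks n m1 m2 (Sum.inr u) (Sum.inl m) := trivial
@[simp] lemma Ks_lr {g : Fin n} {u : Unit} : Ks n m1 m2 (Sum.inl g) (Sum.inr u) ↔ g ∈ m1 ∪ m2 := Iff.rfl
@[simp] lemma Ks_rr {u v : Unit} : ¬ Ks n m1 m2 (Sum.inr u) (Sum.inr v) := fun h => h

@[simp] lemma K12_ll {g m : Fin n} : K12 n m1 m2 (Sum.inl g) (Sum.inl m) ↔ g ≠ m := Iff.rfl
@[simp] lemma K12_rl {u : Unit} {m : Fin n} : K12 n m1 m2 (Sum.inr u) (Sum.inl m) := trivial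
@[simp] lemma K12_lf {g : Fin n} : K12 n m1 m2 (Sum.inl g) (Sum.inr false) ↔ g ∈ m1 := Iff.rfl
@[simp] lemma K12_lt {g : Fin n} : K12 n m1 m2 (Sum.inl g) (Sum.inr true) ↔ g ∈ m2 := Iff.rfl
@[simp] lemma K12_rr {u : Unit} {b : Bool} : ¬ K12 n m1 m2 (Sum.inr u) (Sum.inr b) := fun h => h

@[simp] lemma mem_intentOf {G M : Type*} {I : G → M → Prop} {A : Set G} {m : M} :
    m ∈ intentOf I A ↔ ∀ g ∈ A, I g m := Iff.rfl

@[simp] lemma mem_extentOf {G M : Type*} {I : G → M → Prop} {B : Set M} {g : G} :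
    g ∈ extentOf I B ↔ ∀ m ∈ B, I g m := Iff.rfl

lemma forall_compl_ne {α : Type*} {T : Set α} {m : α} :
    (∀ g ∉ T, g ≠ m) ↔ m ∈ T := by
  constructor
  · intro h; by_contra hm; exact h m hm rfl
  · intro hm g hg hgm; exact hg (hgm ▸ hm)

lemma forall_mem_ne2 {α : Type*} {T : Set α} {m : α} :
    (∀ a ∈ T, a ≠ m) ↔ m ∉ T := by
  constructor
  · intro h hm; exact h m hm rfl
  · intro hm a ha ham; exact hm (ham ▸ ha)

lemma forall_mem_union' {α : Type*} {s t : Set α} {p : α → Prop} :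
    (∀ x ∈ s ∪ t, p x) ↔ (∀ x ∈ s, p x) ∧ (∀ x ∈ t, p x) := by
  simp only [Set.mem_union, or_imp, forall_and]

lemma forall_mem_ne {α : Type*} {T : Set α} {g : α} :
    (∀ m ∈ T, g ≠ m) ↔ g ∉ T := by
  constructor
  · intro h hg; exact h g hg rfl
  · intro hg m hm hgm; exact hg (hgm ▸ hm)

end Aux

section KsCount
variable (n : ℕ) (m1 m2 : Set (Fin n))

/-- parametrization of the concepts of `K_s` (assuming `m1 ∪ m2 = univ`). -/
def fKs : Set (Fin n) ⊕ Set (Fin n) → Set (Fin n ⊕ Unit) × Set (Fin n ⊕ Unit)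
  | Sum.inl T => (Sum.inl '' Tᶜ ∪ {Sum.inr ()}, Sum.inl '' T)
  | Sum.inr T => (Sum.inl '' Tᶜ, Sum.inl '' T ∪ {Sum.inr ()})

lemma fKs_inj : Function.Injective (fKs n) := by
  rintro (T | T) (T' | T') h <;> simp only [fKs, Prod.mk.injEq] at h
  · have : T = T' := Set.ext fun m => by simpa using Set.ext_iff.mp h.2 (Sum.inl m)
    rw [this]
  · exact absurd (Set.ext_iff.mp h.1 (Sum.inr ())) (by simp)
  · exact absurd (Set.ext_iff.mp h.1 (Sum.inr ())) (by simp)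
  · have : T = T' := Set.ext fun m => by simpa using Set.ext_iff.mp h.2 (Sum.inl m)
    rw [this]

lemma range_fKs (hcov : m1 ∪ m2 = Set.univ) :
    Set.range (fKs n) = Concepts (Ks n m1 m2) := by
  have hmem : ∀ g : Fin n, g ∈ m1 ∪ m2 := fun g => hcov ▸ Set.mem_univ g
  ext ⟨A, B⟩
  constructor
  · rintro ⟨(T | T), h⟩ <;> cases h <;> constructor
    · ext (m | u) <;>
        simp [intentOf, forall_mem_union', Set.forall_mem_image,
          forall_compl_ne]
    · ext (g | u) <;>
        simp [extentOf, forall_mem_union', Set.forall_mem_image,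
          forall_mem_ne]
    · ext (m | u) <;>
        simp [intentOf, forall_mem_union', Set.forall_mem_image,
          forall_compl_ne, hmem]
    · ext (g | u) <;>
        simp [extentOf, forall_mem_union', Set.forall_mem_image,
          forall_mem_ne, hmem]
  · rintro ⟨hB, hA⟩
    replace hB : intentOf (Ks n m1 m2) A = B := hB
    replace hA : extentOf (Ks n m1 m2) B = A := hA
    by_cases hg : Sum.inr () ∈ A
    · have hsB : Sum.inr () ∉ B := by
        intro hs
        rw [← hB] at hs
        exact Ks_rr (hs (Sum.inr ()) hg)
      refine ⟨Sum.inl {m | Sum.inl m ∈ B}, ?_⟩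
      simp only [fKs, Prod.mk.injEq]
      constructor
      · rw [← hA]
        symm
        ext (g | u)
        · simp only [mem_extentOf, Set.mem_union, Set.mem_singleton_iff,
            Set.mem_image, Set.mem_compl_iff, Set.mem_setOf_eq]
          constructor
          · intro h
            exact Or.inl ⟨g, fun hgm => h (Sum.inl g) hgm rfl, rfl⟩
          · rintro (⟨g', hg', hgx⟩ | hu) (m | u) hm
            · cases hgx
              simp only [Ks_ll]; rintro rfl; exact hg' hm
            · exact absurd hm hsB
            · cases hu
            · cases hu
        · simp only [mem_extentOf, Set.mem_union, Set.mem_singleton_iff,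
            Set.mem_image]
          refine iff_of_true (fun m hm => ?_) (Or.inr trivial)
          cases m with
          | inl m => simp
          | inr u => exact absurd hm hsB
      · ext (m | u)
        · simp
        · simpa using hsB
    · have hsB : Sum.inr () ∈ B := by
        rw [← hB]
        rintro (g | u) hgA
        · exact hmem g
        · exact absurd hgA (by cases u; exact hg)
      refine ⟨Sum.inr {m | Sum.inl m ∈ B}, ?_⟩
      simp only [fKs, Prod.mk.injEq]
      constructor
      · rw [← hA]
        symm
        ext (g | u)
        · simp only [mem_extentOf, Set.mem_image, Set.mem_compl_iff,
            Set.mem_setOf_eq]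
          constructor
          · intro h
            exact ⟨g, fun hgm => h (Sum.inl g) hgm rfl, rfl⟩
          · rintro ⟨g', hg', hgx⟩ (m | u) hm
            · cases hgx
              simp only [Ks_ll]; rintro rfl; exact hg' hm
            · cases hgx; exact hmem _
        · simp only [mem_extentOf]
          refine iff_of_false (fun h => ?_) (by rintro ⟨g', _, h'⟩; cases h')
          exact Ks_rr (h (Sum.inr ()) hsB)
      · ext (m | u)
        · simp
        · simpa using hsB

lemma card_Ks (hcov : m1 ∪ m2 = Set.univ) :
    Nat.card (Concepts (Ks n m1 m2)) = 2 ^ n + 2 ^ n := by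
  rw [← range_fKs n m1 m2 hcov, Nat.card_range_of_injective (fKs_inj n),
    Nat.card_sum]
  simp [Nat.card_eq_fintype_card, Fintype.card_set]

end KsCount

section K12Count
variable (n : ℕ) (m1 m2 : Set (Fin n))

/-- the intent of the concept generated by `S ⊆ m1` or `S ⊆ m2`. -/
def BS (S : Set (Fin n)) : Set (Fin n ⊕ Bool) :=
  Sum.inl '' Sᶜ ∪ {x | x = Sum.inr false ∧ S ⊆ m1} ∪ {x | x = Sum.inr true ∧ S ⊆ m2}

/-- parametrization of the concepts of `K_12`. -/
def fK12 : Set (Fin n) ⊕ {S : Set (Fin n) // S ⊆ m1 ∨ S ⊆ m2} →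
    Set (Fin n ⊕ Unit) × Set (Fin n ⊕ Bool)
  | Sum.inl T => (Sum.inl '' Tᶜ ∪ {Sum.inr ()}, Sum.inl '' T)
  | Sum.inr S => (Sum.inl '' S.1, BS n m1 m2 S.1)

lemma fK12_inj : Function.Injective (fK12 n m1 m2) := by
  rintro (T | S) (T' | S') h <;> simp only [fK12, Prod.mk.injEq] at h
  · have : T = T' := Set.ext fun m => by simpa using Set.ext_iff.mp h.2 (Sum.inl m)
    rw [this]
  · exact absurd (Set.ext_iff.mp h.1 (Sum.inr ())) (by simp)
  · exact absurd (Set.ext_iff.mp h.1 (Sum.inr ())) (by simp)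
  · have : S.1 = S'.1 := Set.ext fun g => by simpa using Set.ext_iff.mp h.1 (Sum.inl g)
    rw [Subtype.ext this]

lemma intent_BS (S : Set (Fin n)) :
    intentOf (K12 n m1 m2) (Sum.inl '' S) = BS n m1 m2 S := by
  ext (m | b)
  · simp [intentOf, BS, Set.forall_mem_image, forall_mem_ne2]
  · cases b <;>
      simp [intentOf, BS, Set.forall_mem_image, Set.subset_def]

lemma extent_BS (S : Set (Fin n)) (hS : S ⊆ m1 ∨ S ⊆ m2) :
    extentOf (K12 n m1 m2) (BS n m1 m2 S) = Sum.inl '' S := by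
  ext (g | u)
  · simp only [mem_extentOf, BS, Set.mem_union, Set.mem_image, Set.mem_setOf_eq,
      Set.mem_compl_iff]
    constructor
    · intro h
      refine ⟨g, ?_, rfl⟩
      by_contra hg
      exact h (Sum.inl g) (Or.inl (Or.inl ⟨g, hg, rfl⟩)) rfl
    · rintro ⟨g', hg', hgx⟩ (m | b) hm
      · cases hgx
        rcases hm with (⟨m', hm', h'⟩ | ⟨h', _⟩) | ⟨h', _⟩
        · cases h'
          simp only [K12_ll]; rintro rfl; exact hm' hg'
        · cases h'
        · cases h'
      · cases hgx
        rcases hm with (⟨m', _, h'⟩ | ⟨h', hsub⟩) | ⟨h', hsub⟩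
        · cases h'
        · cases h'; exact hsub hg'
        · cases h'; exact hsub hg'
  · simp only [mem_extentOf]
    refine iff_of_false (fun h => ?_) (by rintro ⟨g', _, h'⟩; cases h')
    rcases hS with hS | hS
    · exact K12_rr (h (Sum.inr false) (Or.inl (Or.inr ⟨rfl, hS⟩)))
    · exact K12_rr (h (Sum.inr true) (Or.inr ⟨rfl, hS⟩))

lemma intent_top (T : Set (Fin n)) :
    intentOf (K12 n m1 m2) (Sum.inl '' Tᶜ ∪ {Sum.inr ()}) = Sum.inl '' T := by
  ext (m | b)
  · simp [intentOf, forall_mem_union', Set.forall_mem_image, forall_compl_ne]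
  · cases b <;>
      simp [intentOf, forall_mem_union', Set.forall_mem_image]

lemma extent_top (T : Set (Fin n)) :
    extentOf (K12 n m1 m2) (Sum.inl '' T) = Sum.inl '' Tᶜ ∪ {Sum.inr ()} := by
  ext (g | u)
  · simp [extentOf, Set.forall_mem_image, forall_mem_ne]
  · simp [extentOf, Set.forall_mem_image]

lemma range_fK12 :
    Set.range (fK12 n m1 m2) = Concepts (K12 n m1 m2) := by
  ext ⟨A, B⟩
  constructor
  · rintro ⟨(T | S), h⟩ <;> cases h
    · exact ⟨intent_top n m1 m2 T, extent_top n m1 m2 T⟩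
    · exact ⟨intent_BS n m1 m2 S.1, extent_BS n m1 m2 S.1 S.2⟩
  · rintro ⟨hB, hA⟩
    replace hB : intentOf (K12 n m1 m2) A = B := hB
    replace hA : extentOf (K12 n m1 m2) B = A := hA
    by_cases hg : Sum.inr () ∈ A
    · have hsB : ∀ b : Bool, Sum.inr b ∉ B := by
        intro b hs
        rw [← hB] at hs
        exact K12_rr (hs (Sum.inr ()) hg)
      have hBT : B = Sum.inl '' {m | Sum.inl m ∈ B} := by
        ext (m | b)
        · simp
        · simpa using hsB b
      refine ⟨Sum.inl {m | Sum.inl m ∈ B}, ?_⟩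
      simp only [fK12, Prod.mk.injEq]
      refine ⟨?_, hBT.symm⟩
      rw [← hA]
      conv_rhs => rw [hBT, extent_top]
    · have hS : {g | Sum.inl g ∈ A} ⊆ m1 ∨ {g | Sum.inl g ∈ A} ⊆ m2 := by
        by_contra hno
        push_neg at hno
        have hf : Sum.inr false ∉ B := by
          intro hs
          rw [← hB] at hs
          exact hno.1 fun g hgA => hs (Sum.inl g) hgA
        have ht : Sum.inr true ∉ B := by
          intro hs
          rw [← hB] at hs
          exact hno.2 fun g hgA => hs (Sum.inl g) hgA
        apply hg
        rw [← hA]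
        rintro (m | b) hm
        · exact trivial
        · cases b
          · exact absurd hm hf
          · exact absurd hm ht
      have hAS : A = Sum.inl '' {g | Sum.inl g ∈ A} := by
        ext (g | u)
        · simp
        · simpa using fun h => hg (by cases u; exact h)
      refine ⟨Sum.inr ⟨{g | Sum.inl g ∈ A}, hS⟩, ?_⟩
      simp only [fK12, Prod.mk.injEq]
      refine ⟨hAS.symm, ?_⟩
      rw [← hB]
      conv_rhs => rw [hAS, intent_BS]

lemma card_subsets (t : Set (Fin n)) :
    Nat.card {S : Set (Fin n) // S ⊆ t} = 2 ^ t.ncard := by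
  haveI : Fintype ↑t := Fintype.ofFinite _
  have e : {S : Set (Fin n) // S ⊆ t} ≃ Set t := Equiv.Set.powerset t
  rw [Nat.card_congr e, Nat.card_eq_fintype_card, Fintype.card_set,
    ← Nat.card_eq_fintype_card, Nat.card_coe_set_eq]

lemma card_or :
    Nat.card {S : Set (Fin n) // S ⊆ m1 ∨ S ⊆ m2} + 2 ^ (m1 ∩ m2).ncard =
      2 ^ m1.ncard + 2 ^ m2.ncard := by
  have h1 : {S : Set (Fin n) | S ⊆ m1} ∩ {S | S ⊆ m2} = {S | S ⊆ m1 ∩ m2} := by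
    ext S; simp [Set.subset_inter_iff]
  have h2 := Set.ncard_union_add_ncard_inter {S : Set (Fin n) | S ⊆ m1}
    {S | S ⊆ m2} (Set.toFinite _) (Set.toFinite _)
  rw [h1] at h2
  have e1 : ∀ t : Set (Fin n), ({S : Set (Fin n) | S ⊆ t}).ncard = 2 ^ t.ncard := by
    intro t
    rw [← Nat.card_coe_set_eq]
    exact card_subsets n t
  have e2 : Nat.card {S : Set (Fin n) // S ⊆ m1 ∨ S ⊆ m2} =
      ({S : Set (Fin n) | S ⊆ m1} ∪ {S | S ⊆ m2}).ncard := by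
    rw [← Nat.card_coe_set_eq]
    exact Nat.card_congr (Equiv.subtypeEquivRight fun S => Iff.rfl)
  rw [e2, e1, e1, e1] at *
  omega

lemma card_K12 :
    Nat.card (Concepts (K12 n m1 m2)) =
      2 ^ n + Nat.card {S : Set (Fin n) // S ⊆ m1 ∨ S ⊆ m2} := by
  rw [← range_fK12 n m1 m2, Nat.card_range_of_injective (fK12_inj n m1 m2),
    Nat.card_sum]
  simp [Nat.card_eq_fintype_card, Fintype.card_set]

end K12Count

/-- Let `n > 2` and `m_1', m_2' ⊆ S_n` with `m_1' ∪ m_2' = S_n`,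
`∅ ⊊ m_1', m_2' ⊊ S_n`, and `m_1', m_2'` incomparable. Then
`|𝔅(K_s)| − |𝔅(K_12)| = 2^n − 2^|m_1'| − 2^|m_2'| + 2^|m_1' ∩ m_2'|`. -/
theorem stmt16 (n : ℕ) (hn : 2 < n) (m1 m2 : Set (Fin n))
    (hcov : m1 ∪ m2 = Set.univ)
    (h1ne : m1.Nonempty) (h1pr : m1 ≠ Set.univ)
    (h2ne : m2.Nonempty) (h2pr : m2 ≠ Set.univ)
    (h12 : ¬ m1 ⊆ m2) (h21 : ¬ m2 ⊆ m1) :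
    (Nat.card (Concepts (Ks n m1 m2)) : ℤ) -
        Nat.card (Concepts (K12 n m1 m2)) =
      2 ^ n - 2 ^ m1.ncard - 2 ^ m2.ncard + 2 ^ (m1 ∩ m2).ncard := by
  have h := card_or n m1 m2
  rw [card_Ks n m1 m2 hcov, card_K12 n m1 m2]
  push_cast
  have h' : (Nat.card {S : Set (Fin n) // S ⊆ m1 ∨ S ⊆ m2} : ℤ) +
      2 ^ (m1 ∩ m2).ncard = 2 ^ m1.ncard + 2 ^ m2.ncard := by
    exact_mod_cast congrArg (Nat.cast : ℕ → ℤ) h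
  linarith
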